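/- Let T be an extension of Robinson arithmetic Q with Pr_T definable and let φ define the relation B as in Boolos's construction. For any natural number i and closed term s with value 𝐬, the sentence φ(i,s) is true in ω if and only if there is a formula μ with at most the free variable v₀ such that |μ| < 𝐬 and μ names i. Consequently, ψ(i,s) is true in ω if and only if i is the least natural number that cannot be named by a formula of length < 𝐬. -/

import Mathlib

namespace Boolos

/-- Terms of the first-order language of arithmetic: variables v₀,v₁,…, 0, successor s, +, ·. -/
inductive Term : Type
  | var : ℕ → Term
  | zero : Term
  | succ : Term → Term
  | add : Term → Term → Term
  | mul : Term → Term → Term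
  deriving DecidableEq

/-- Formulas of the first-order language of arithmetic. -/
inductive Formula : Type
  | eq : Term → Term → Formula
  | lt : Term → Term → Formula
  | not : Formula → Formula
  | and : Formula → Formula → Formula
  | or : Formula → Formula → Formula
  | imp : Formula → Formula → Formula
  | all : ℕ → Formula → Formula
  | ex : ℕ → Formula → Formula
  deriving DecidableEq

/-- The primitive symbols of the language (finitely many apart from the variables). -/
inductive Symbol : Type
  | zero : Symbol
  | succ : Symbol
  | plus : Symbol
  | times : Symbol
  | eqs : Symbol
  | lts : Symbol
  | nots : Symbol
  | ands : Symbol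
  | ors : Symbol
  | imps : Symbol
  | alls : Symbol
  | exs : Symbol
  | var : ℕ → Symbol
  deriving DecidableEq

/-- Gödel numbers of the primitive symbols. -/
def Symbol.code : Symbol → ℕ
  | .zero => 1
  | .succ => 2
  | .plus => 3
  | .times => 4
  | .eqs => 5
  | .lts => 6
  | .nots => 7
  | .ands => 8
  | .ors => 9
  | .imps => 10
  | .alls => 11
  | .exs => 12
  | .var n => 13 + n

/-- The sequence of symbols occurring in a term. -/
def Term.symbols : Term → List Symbol
  | .var i => [.var i]
  | .zero => [.zero]
  | .succ t => .succ :: t.symbols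
  | .add t u => t.symbols ++ .plus :: u.symbols
  | .mul t u => t.symbols ++ .times :: u.symbols

/-- The sequence of symbols occurring in a formula. -/
def Formula.symbols : Formula → List Symbol
  | .eq t u => t.symbols ++ .eqs :: u.symbols
  | .lt t u => t.symbols ++ .lts :: u.symbols
  | .not φ => .nots :: φ.symbols
  | .and φ ψ => φ.symbols ++ .ands :: ψ.symbols
  | .or φ ψ => φ.symbols ++ .ors :: ψ.symbols
  | .imp φ ψ => φ.symbols ++ .imps :: ψ.symbols
  | .all i φ => .alls :: .var i :: φ.symbols
  | .ex i φ => .exs :: .var i :: φ.symbols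

/-- |e| : the length (number of symbols) of a term. -/
def Term.length (t : Term) : ℕ := t.symbols.length

/-- |μ| : the length (number of symbols) of a formula. -/
def Formula.length (φ : Formula) : ℕ := φ.symbols.length

/-- A fixed standard (pairing-based, injective) Gödel numbering of terms. -/
def Term.code : Term → ℕ
  | .var i => Nat.pair 0 i
  | .zero => Nat.pair 1 0
  | .succ t => Nat.pair 2 t.code
  | .add t u => Nat.pair 3 (Nat.pair t.code u.code)
  | .mul t u => Nat.pair 4 (Nat.pair t.code u.code)

/-- ⌜μ⌝ : the Gödel number of a formula. -/
def Formula.gnum : Formula → ℕ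
  | .eq t u => Nat.pair 0 (Nat.pair t.code u.code)
  | .lt t u => Nat.pair 1 (Nat.pair t.code u.code)
  | .not φ => Nat.pair 2 φ.gnum
  | .and φ ψ => Nat.pair 3 (Nat.pair φ.gnum ψ.gnum)
  | .or φ ψ => Nat.pair 4 (Nat.pair φ.gnum ψ.gnum)
  | .imp φ ψ => Nat.pair 5 (Nat.pair φ.gnum ψ.gnum)
  | .all i φ => Nat.pair 6 (Nat.pair i φ.gnum)
  | .ex i φ => Nat.pair 7 (Nat.pair i φ.gnum)

/-- The variables occurring in a term. -/
def Term.varsOf : Term → Finset ℕ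
  | .var i => {i}
  | .zero => ∅
  | .succ t => t.varsOf
  | .add t u => t.varsOf ∪ u.varsOf
  | .mul t u => t.varsOf ∪ u.varsOf

/-- All variables (free or bound) occurring in a formula. -/
def Formula.allVars : Formula → Finset ℕ
  | .eq t u => t.varsOf ∪ u.varsOf
  | .lt t u => t.varsOf ∪ u.varsOf
  | .not φ => φ.allVars
  | .and φ ψ => φ.allVars ∪ ψ.allVars
  | .or φ ψ => φ.allVars ∪ ψ.allVars
  | .imp φ ψ => φ.allVars ∪ ψ.allVars
  | .all i φ => insert i φ.allVars
  | .ex i φ => insert i φ.allVars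

/-- The free variables of a formula. -/
def Formula.freeVars : Formula → Finset ℕ
  | .eq t u => t.varsOf ∪ u.varsOf
  | .lt t u => t.varsOf ∪ u.varsOf
  | .not φ => φ.freeVars
  | .and φ ψ => φ.freeVars ∪ ψ.freeVars
  | .or φ ψ => φ.freeVars ∪ ψ.freeVars
  | .imp φ ψ => φ.freeVars ∪ ψ.freeVars
  | .all i φ => φ.freeVars.erase i
  | .ex i φ => φ.freeVars.erase i

/-- Substitution of a term for a variable in a term. -/
def Term.subst : Term → ℕ → Term → Term
  | .var i, x, s => if i = x then s else .var i
  | .zero, _, _ => .zero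
  | .succ t, x, s => .succ (t.subst x s)
  | .add t u, x, s => .add (t.subst x s) (u.subst x s)
  | .mul t u, x, s => .mul (t.subst x s) (u.subst x s)

/-- Substitution of a term for the free occurrences of a variable in a formula. -/
def Formula.subst : Formula → ℕ → Term → Formula
  | .eq t u, x, s => .eq (t.subst x s) (u.subst x s)
  | .lt t u, x, s => .lt (t.subst x s) (u.subst x s)
  | .not φ, x, s => .not (φ.subst x s)
  | .and φ ψ, x, s => .and (φ.subst x s) (ψ.subst x s)
  | .or φ ψ, x, s => .or (φ.subst x s) (ψ.subst x s)
  | .imp φ ψ, x, s => .imp (φ.subst x s) (ψ.subst x s)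
  | .all i φ, x, s => if i = x then .all i φ else .all i (φ.subst x s)
  | .ex i φ, x, s => if i = x then .ex i φ else .ex i (φ.subst x s)

/-- The number of occurrences of a variable in a term. -/
def Term.countOcc : Term → ℕ → ℕ
  | .var i, x => if i = x then 1 else 0
  | .zero, _ => 0
  | .succ t, x => t.countOcc x
  | .add t u, x => t.countOcc x + u.countOcc x
  | .mul t u, x => t.countOcc x + u.countOcc x

/-- The number of free occurrences of a variable in a formula. -/
def Formula.countFreeOcc : Formula → ℕ → ℕ
  | .eq t u, x => t.countOcc x + u.countOcc x
  | .lt t u, x => t.countOcc x + u.countOcc x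
  | .not φ, x => φ.countFreeOcc x
  | .and φ ψ, x => φ.countFreeOcc x + ψ.countFreeOcc x
  | .or φ ψ, x => φ.countFreeOcc x + ψ.countFreeOcc x
  | .imp φ ψ, x => φ.countFreeOcc x + ψ.countFreeOcc x
  | .all i φ, x => if i = x then 0 else φ.countFreeOcc x
  | .ex i φ, x => if i = x then 0 else φ.countFreeOcc x

/-- The numeral s s … s 0 for a natural number. -/
def numeral : ℕ → Term
  | 0 => .zero
  | n + 1 => .succ (numeral n)

/-- Structures for the language of arithmetic. -/
structure Struct where
  carrier : Type
  zero : carrier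
  succ : carrier → carrier
  add : carrier → carrier → carrier
  mul : carrier → carrier → carrier
  lt : carrier → carrier → Prop

/-- The value of a term in a structure under an assignment. -/
def Term.val (M : Struct) (v : ℕ → M.carrier) : Term → M.carrier
  | .var i => v i
  | .zero => M.zero
  | .succ t => M.succ (Term.val M v t)
  | .add t u => M.add (Term.val M v t) (Term.val M v u)
  | .mul t u => M.mul (Term.val M v t) (Term.val M v u)

/-- Satisfaction of a formula in a structure under an assignment. -/
def Formula.Realize (M : Struct) : (ℕ → M.carrier) → Formula → Prop
  | v, .eq t u => Term.val M v t = Term.val M v u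
  | v, .lt t u => M.lt (Term.val M v t) (Term.val M v u)
  | v, .not φ => ¬ Formula.Realize M v φ
  | v, .and φ ψ => Formula.Realize M v φ ∧ Formula.Realize M v ψ
  | v, .or φ ψ => Formula.Realize M v φ ∨ Formula.Realize M v ψ
  | v, .imp φ ψ => Formula.Realize M v φ → Formula.Realize M v ψ
  | v, .all i φ => ∀ a : M.carrier, Formula.Realize M (Function.update v i a) φ
  | v, .ex i φ => ∃ a : M.carrier, Formula.Realize M (Function.update v i a) φ

/-- ω : the standard model of arithmetic. -/
@[reducible] def stdModel : Struct :=
  { carrier := ℕ, zero := 0, succ := Nat.succ, add := (· + ·), mul := (· * ·),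
    lt := (· < ·) }

/-- A formula is true if it holds in the standard model ω (under every assignment). -/
def IsTrue (φ : Formula) : Prop := ∀ v : ℕ → ℕ, Formula.Realize stdModel v φ

/-- The value of a (closed) term in the standard model ω. -/
def Term.valNat (t : Term) : ℕ := Term.val stdModel (fun _ => 0) t

/-- A sentence is a formula with no free variables. -/
def Formula.IsSentence (φ : Formula) : Prop := φ.freeVars = ∅

/-- Provability from a theory; by the Gödel completeness theorem, identified with
semantic consequence. -/
def Proves (T : Set Formula) (φ : Formula) : Prop :=
  ∀ (M : Struct) (v : ℕ → M.carrier),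
    (∀ ψ ∈ T, Formula.Realize M v ψ) → Formula.Realize M v φ

/-- Consistency: no formula is both provable and refutable. -/
def Consistent (T : Set Formula) : Prop :=
  ¬ ∃ φ : Formula, Proves T φ ∧ Proves T (.not φ)

/-- The biconditional, as an abbreviation. -/
def Formula.iffF (φ ψ : Formula) : Formula := .and (.imp φ ψ) (.imp ψ φ)

def v0 : Term := .var 0
def v1 : Term := .var 1
def v2 : Term := .var 2

/-- The axioms of Robinson arithmetic Q (with < defined as usual). -/
def QAxioms : Set Formula :=
  { .all 0 (.all 1 (.imp (.eq (.succ v0) (.succ v1)) (.eq v0 v1))),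
    .all 0 (.not (.eq (.succ v0) .zero)),
    .all 0 (.imp (.not (.eq v0 .zero)) (.ex 1 (.eq v0 (.succ v1)))),
    .all 0 (.eq (.add v0 .zero) v0),
    .all 0 (.all 1 (.eq (.add v0 (.succ v1)) (.succ (.add v0 v1)))),
    .all 0 (.eq (.mul v0 .zero) .zero),
    .all 0 (.all 1 (.eq (.mul v0 (.succ v1)) (.add (.mul v0 v1) v0))),
    .all 0 (.all 1 (Formula.iffF (.lt v0 v1) (.ex 2 (.eq (.add v2 (.succ v0)) v1)))) }

/-- Pr_S : the set of Gödel numbers of sentences provable in S. -/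
def PrSet (T : Set Formula) : Set ℕ :=
  {m | ∃ σ : Formula, σ.IsSentence ∧ Proves T σ ∧ m = σ.gnum}

/-- A formula μ with at most the free variable v₀ names the number i in T
if T ⊢ (∀v₀)(μ(v₀) ↔ v₀ = i). -/
def Names (T : Set Formula) (μ : Formula) (i : ℕ) : Prop :=
  μ.freeVars ⊆ {0} ∧ Proves T (.all 0 (Formula.iffF μ (.eq v0 (numeral i))))

/-- i is named in T by some formula of length < m. -/
def Nameable (T : Set Formula) (m i : ℕ) : Prop :=
  ∃ μ : Formula, μ.length < m ∧ Names T μ i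

/-- φ(v₀) defines the set A in the standard model ω. -/
def DefinesSet (φ : Formula) (A : Set ℕ) : Prop :=
  φ.freeVars ⊆ {0} ∧ ∀ i : ℕ, i ∈ A ↔ IsTrue (φ.subst 0 (numeral i))

/-- A set of natural numbers is definable (in ω). -/
def Definable (A : Set ℕ) : Prop := ∃ φ : Formula, DefinesSet φ A

/-- φ(v₀,v₁) defines the binary relation R in the standard model ω. -/
def DefinesRel (φ : Formula) (R : ℕ → ℕ → Prop) : Prop :=
  φ.freeVars ⊆ {0, 1} ∧
    ∀ i j : ℕ, R i j ↔ IsTrue ((φ.subst 0 (numeral i)).subst 1 (numeral j))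

/-- The relation B of Boolos's construction: (i,j) ∈ B iff some formula μ with at most
the free variable v₀, with ⌜μ⌝ < g(j) and |μ| < j, names i. -/
def BRel (T : Set Formula) (g : ℕ → ℕ) (i j : ℕ) : Prop :=
  ∃ μ : Formula, μ.gnum < g j ∧ μ.length < j ∧ Names T μ i

/-- g is a recursive function bounding Gödel numbers in terms of length, as in the
construction: whenever all variables of μ are among the first j ones and |μ| < j,
we have ⌜μ⌝ < g(j). -/
def GoodBound (g : ℕ → ℕ) : Prop :=
  Computable g ∧
    ∀ (μ : Formula) (j : ℕ), μ.allVars ⊆ Finset.range j → μ.length < j → μ.gnum < g j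

/-- ψ(v₀,v₁) ≔ ¬φ(v₀,v₁) ∧ (∀v₂ < v₀) φ(v₂,v₁). -/
def psiOf (φ : Formula) : Formula :=
  .and (.not φ) (.all 2 (.imp (.lt v2 v0) (φ.subst 0 v2)))

/-- The closed term t ≔ 10·(k·k). -/
def tTerm (k : ℕ) : Term := .mul (numeral 10) (.mul (numeral k) (numeral k))


/-! ### Auxiliary lemmas -/

theorem Term.val_congr {M : Struct} {v w : ℕ → M.carrier} (t : Term)
    (h : ∀ x ∈ t.varsOf, v x = w x) : Term.val M v t = Term.val M w t := by
  induction t with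
  | var i => exact h i (by simp [Term.varsOf])
  | zero => rfl
  | succ t ih =>
      simp only [Term.val]; rw [ih (fun x hx => h x (by simpa [Term.varsOf] using hx))]
  | add t u iht ihu =>
      simp only [Term.val]
      rw [iht (fun x hx => h x (by simp [Term.varsOf, hx])),
        ihu (fun x hx => h x (by simp [Term.varsOf, hx]))]
  | mul t u iht ihu =>
      simp only [Term.val]
      rw [iht (fun x hx => h x (by simp [Term.varsOf, hx])),
        ihu (fun x hx => h x (by simp [Term.varsOf, hx]))]

theorem Formula.realize_congr {M : Struct} (φ : Formula) :
    ∀ {v w : ℕ → M.carrier}, (∀ x ∈ φ.freeVars, v x = w x) →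
      (Formula.Realize M v φ ↔ Formula.Realize M w φ) := by
  induction φ with
  | eq t u =>
      intro v w h
      simp only [Formula.Realize]
      rw [Term.val_congr t (fun x hx => h x (by simp [Formula.freeVars, hx])),
        Term.val_congr u (fun x hx => h x (by simp [Formula.freeVars, hx]))]
  | lt t u =>
      intro v w h
      simp only [Formula.Realize]
      rw [Term.val_congr t (fun x hx => h x (by simp [Formula.freeVars, hx])),
        Term.val_congr u (fun x hx => h x (by simp [Formula.freeVars, hx]))]
  | not φ ih =>
      intro v w h
      simp only [Formula.Realize]
      rw [ih (fun x hx => h x (by simpa [Formula.freeVars] using hx))]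
  | and φ ψ ihφ ihψ =>
      intro v w h
      simp only [Formula.Realize]
      rw [ihφ (fun x hx => h x (by simp [Formula.freeVars, hx])),
        ihψ (fun x hx => h x (by simp [Formula.freeVars, hx]))]
  | or φ ψ ihφ ihψ =>
      intro v w h
      simp only [Formula.Realize]
      rw [ihφ (fun x hx => h x (by simp [Formula.freeVars, hx])),
        ihψ (fun x hx => h x (by simp [Formula.freeVars, hx]))]
  | imp φ ψ ihφ ihψ =>
      intro v w h
      simp only [Formula.Realize]
      rw [ihφ (fun x hx => h x (by simp [Formula.freeVars, hx])),
        ihψ (fun x hx => h x (by simp [Formula.freeVars, hx]))]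
  | all i φ ih =>
      intro v w h
      simp only [Formula.Realize]
      refine forall_congr' fun a => ih fun x hx => ?_
      rcases eq_or_ne x i with rfl | hne
      · simp
      · rw [Function.update_of_ne hne, Function.update_of_ne hne]
        exact h x (by simp [Formula.freeVars, Finset.mem_erase, hne, hx])
  | ex i φ ih =>
      intro v w h
      simp only [Formula.Realize]
      refine exists_congr fun a => ih fun x hx => ?_
      rcases eq_or_ne x i with rfl | hne
      · simp
      · rw [Function.update_of_ne hne, Function.update_of_ne hne]
        exact h x (by simp [Formula.freeVars, Finset.mem_erase, hne, hx])

theorem Term.subst_val {M : Struct} (t : Term) (x : ℕ) (u : Term) (v : ℕ → M.carrier) :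
    Term.val M v (t.subst x u) =
      Term.val M (Function.update v x (Term.val M v u)) t := by
  induction t with
  | var i =>
      by_cases h : i = x
      · subst h; simp [Term.subst, Term.val]
      · simp [Term.subst, Term.val, h, Function.update_of_ne h]
  | zero => rfl
  | succ t ih => simp [Term.subst, Term.val, ih]
  | add t u iht ihu => simp [Term.subst, Term.val, iht, ihu]
  | mul t u iht ihu => simp [Term.subst, Term.val, iht, ihu]

theorem Formula.realize_subst {M : Struct} (ψ : Formula) (x : ℕ) (t : Term)
    (hcap : ∀ y ∈ t.varsOf, y ∉ ψ.allVars) :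
    ∀ v : ℕ → M.carrier,
      (Formula.Realize M v (ψ.subst x t) ↔
        Formula.Realize M (Function.update v x (Term.val M v t)) ψ) := by
  induction ψ generalizing x with
  | eq a b => intro v; simp [Formula.subst, Formula.Realize, Term.subst_val]
  | lt a b => intro v; simp [Formula.subst, Formula.Realize, Term.subst_val]
  | not φ ih =>
      intro v
      simp only [Formula.subst, Formula.Realize]
      rw [ih x (fun y hy => hcap y hy) v]
  | and φ ψ ihφ ihψ =>
      intro v
      simp only [Formula.subst, Formula.Realize]
      rw [ihφ x (fun y hy hm => hcap y hy (by simp [Formula.allVars, hm])) v,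
        ihψ x (fun y hy hm => hcap y hy (by simp [Formula.allVars, hm])) v]
  | or φ ψ ihφ ihψ =>
      intro v
      simp only [Formula.subst, Formula.Realize]
      rw [ihφ x (fun y hy hm => hcap y hy (by simp [Formula.allVars, hm])) v,
        ihψ x (fun y hy hm => hcap y hy (by simp [Formula.allVars, hm])) v]
  | imp φ ψ ihφ ihψ =>
      intro v
      simp only [Formula.subst, Formula.Realize]
      rw [ihφ x (fun y hy hm => hcap y hy (by simp [Formula.allVars, hm])) v,
        ihψ x (fun y hy hm => hcap y hy (by simp [Formula.allVars, hm])) v]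
  | all i φ ih =>
      intro v
      by_cases hix : i = x
      · subst hix
        simp only [Formula.subst, if_pos rfl, Formula.Realize]
        refine forall_congr' fun a => ?_
        rw [Function.update_idem]
      · have hit : i ∉ t.varsOf := fun hm => hcap i hm (by simp [Formula.allVars])
        simp only [Formula.subst, if_neg hix, Formula.Realize]
        refine forall_congr' fun a => ?_
        rw [ih x (fun y hy hm => hcap y hy (by simp [Formula.allVars, hm])) _]
        rw [Term.val_congr t (v := Function.update v i a) (w := v)
          (fun y hy => Function.update_of_ne (by rintro rfl; exact hit hy) _ _)]
        rw [Function.update_comm hix]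
  | ex i φ ih =>
      intro v
      by_cases hix : i = x
      · subst hix
        simp only [Formula.subst, if_pos rfl, Formula.Realize]
        refine exists_congr fun a => ?_
        rw [Function.update_idem]
      · have hit : i ∉ t.varsOf := fun hm => hcap i hm (by simp [Formula.allVars])
        simp only [Formula.subst, if_neg hix, Formula.Realize]
        refine exists_congr fun a => ?_
        rw [ih x (fun y hy hm => hcap y hy (by simp [Formula.allVars, hm])) _]
        rw [Term.val_congr t (v := Function.update v i a) (w := v)
          (fun y hy => Function.update_of_ne (by rintro rfl; exact hit hy) _ _)]
        rw [Function.update_comm hix]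

/-! Renaming of variables -/

def Term.rename (f : ℕ → ℕ) : Term → Term
  | .var i => .var (f i)
  | .zero => .zero
  | .succ t => .succ (t.rename f)
  | .add t u => .add (t.rename f) (u.rename f)
  | .mul t u => .mul (t.rename f) (u.rename f)

def Formula.rename (f : ℕ → ℕ) : Formula → Formula
  | .eq t u => .eq (t.rename f) (u.rename f)
  | .lt t u => .lt (t.rename f) (u.rename f)
  | .not φ => .not (φ.rename f)
  | .and φ ψ => .and (φ.rename f) (ψ.rename f)
  | .or φ ψ => .or (φ.rename f) (ψ.rename f)
  | .imp φ ψ => .imp (φ.rename f) (ψ.rename f)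
  | .all i φ => .all (f i) (φ.rename f)
  | .ex i φ => .ex (f i) (φ.rename f)

theorem Term.rename_val {M : Struct} (f : ℕ → ℕ) (t : Term) (v : ℕ → M.carrier) :
    Term.val M v (t.rename f) = Term.val M (v ∘ f) t := by
  induction t with
  | var i => rfl
  | zero => rfl
  | succ t ih => simp [Term.rename, Term.val, ih]
  | add t u iht ihu => simp [Term.rename, Term.val, iht, ihu]
  | mul t u iht ihu => simp [Term.rename, Term.val, iht, ihu]

theorem Formula.realize_rename {M : Struct} {f : ℕ → ℕ} (hf : Function.Injective f)
    (φ : Formula) : ∀ v : ℕ → M.carrier,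
      (Formula.Realize M v (φ.rename f) ↔ Formula.Realize M (v ∘ f) φ) := by
  induction φ with
  | eq t u => intro v; simp [Formula.rename, Formula.Realize, Term.rename_val]
  | lt t u => intro v; simp [Formula.rename, Formula.Realize, Term.rename_val]
  | not φ ih => intro v; simp [Formula.rename, Formula.Realize, ih]
  | and φ ψ ihφ ihψ => intro v; simp [Formula.rename, Formula.Realize, ihφ, ihψ]
  | or φ ψ ihφ ihψ => intro v; simp [Formula.rename, Formula.Realize, ihφ, ihψ]
  | imp φ ψ ihφ ihψ => intro v; simp [Formula.rename, Formula.Realize, ihφ, ihψ]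
  | all i φ ih =>
      intro v
      simp only [Formula.rename, Formula.Realize]
      refine forall_congr' fun a => ?_
      rw [ih]
      have : (Function.update v (f i) a) ∘ f = Function.update (v ∘ f) i a := by
        funext x
        rcases eq_or_ne x i with rfl | hne
        · simp
        · simp [Function.comp, Function.update_of_ne hne,
            Function.update_of_ne (fun h => hne (hf h))]
      rw [this]
  | ex i φ ih =>
      intro v
      simp only [Formula.rename, Formula.Realize]
      refine exists_congr fun a => ?_
      rw [ih]
      have : (Function.update v (f i) a) ∘ f = Function.update (v ∘ f) i a := by
        funext x
        rcases eq_or_ne x i with rfl | hne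
        · simp
        · simp [Function.comp, Function.update_of_ne hne,
            Function.update_of_ne (fun h => hne (hf h))]
      rw [this]

theorem Term.rename_length (f : ℕ → ℕ) (t : Term) :
    (t.rename f).symbols.length = t.symbols.length := by
  induction t <;> simp [Term.rename, Term.symbols, *]

theorem Formula.rename_symbols_length (f : ℕ → ℕ) (φ : Formula) :
    (φ.rename f).symbols.length = φ.symbols.length := by
  induction φ <;> simp [Formula.rename, Formula.symbols, Term.rename_length, *]

theorem Formula.rename_length (f : ℕ → ℕ) (φ : Formula) :
    (φ.rename f).length = φ.length := by
  simp [Formula.length, Formula.rename_symbols_length]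

theorem Term.rename_varsOf (f : ℕ → ℕ) (t : Term) :
    (t.rename f).varsOf = t.varsOf.image f := by
  induction t <;> simp [Term.rename, Term.varsOf, Finset.image_union, *]

theorem Formula.rename_allVars (f : ℕ → ℕ) (φ : Formula) :
    (φ.rename f).allVars = φ.allVars.image f := by
  induction φ <;>
    simp [Formula.rename, Formula.allVars, Term.rename_varsOf, Finset.image_union,
      Finset.image_insert, *]

theorem Formula.rename_freeVars (f : ℕ → ℕ) (φ : Formula) :
    (φ.rename f).freeVars ⊆ φ.freeVars.image f := by
  induction φ with
  | eq t u => simp [Formula.rename, Formula.freeVars, Term.rename_varsOf, Finset.image_union]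
  | lt t u => simp [Formula.rename, Formula.freeVars, Term.rename_varsOf, Finset.image_union]
  | not φ ih => simpa [Formula.rename, Formula.freeVars] using ih
  | and φ ψ ihφ ihψ =>
      simp only [Formula.rename, Formula.freeVars, Finset.image_union]
      exact Finset.union_subset_union ihφ ihψ
  | or φ ψ ihφ ihψ =>
      simp only [Formula.rename, Formula.freeVars, Finset.image_union]
      exact Finset.union_subset_union ihφ ihψ
  | imp φ ψ ihφ ihψ =>
      simp only [Formula.rename, Formula.freeVars, Finset.image_union]
      exact Finset.union_subset_union ihφ ihψ
  | all i φ ih =>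
      simp only [Formula.rename, Formula.freeVars]
      intro x hx
      rcases Finset.mem_erase.mp hx with ⟨hxi, hxm⟩
      rcases Finset.mem_image.mp (ih hxm) with ⟨y, hy, rfl⟩
      exact Finset.mem_image.mpr ⟨y, Finset.mem_erase.mpr ⟨fun h => hxi (by rw [h]), hy⟩, rfl⟩
  | ex i φ ih =>
      simp only [Formula.rename, Formula.freeVars]
      intro x hx
      rcases Finset.mem_erase.mp hx with ⟨hxi, hxm⟩
      rcases Finset.mem_image.mp (ih hxm) with ⟨y, hy, rfl⟩
      exact Finset.mem_image.mpr ⟨y, Finset.mem_erase.mpr ⟨fun h => hxi (by rw [h]), hy⟩, rfl⟩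

theorem Term.card_varsOf_le (t : Term) : t.varsOf.card ≤ t.symbols.length := by
  induction t with
  | var i => simp [Term.varsOf, Term.symbols]
  | zero => simp [Term.varsOf, Term.symbols]
  | succ t ih => simp only [Term.varsOf, Term.symbols, List.length_cons]; omega
  | add t u iht ihu =>
      simp only [Term.varsOf, Term.symbols, List.length_append, List.length_cons]
      have := Finset.card_union_le t.varsOf u.varsOf
      omega
  | mul t u iht ihu =>
      simp only [Term.varsOf, Term.symbols, List.length_append, List.length_cons]
      have := Finset.card_union_le t.varsOf u.varsOf
      omega

theorem Formula.card_allVars_le (φ : Formula) : φ.allVars.card ≤ φ.length := by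
  induction φ with
  | eq t u =>
      simp only [Formula.allVars, Formula.length, Formula.symbols, List.length_append,
        List.length_cons]
      have := Finset.card_union_le t.varsOf u.varsOf
      have h1 := t.card_varsOf_le
      have h2 := u.card_varsOf_le
      omega
  | lt t u =>
      simp only [Formula.allVars, Formula.length, Formula.symbols, List.length_append,
        List.length_cons]
      have := Finset.card_union_le t.varsOf u.varsOf
      have h1 := t.card_varsOf_le
      have h2 := u.card_varsOf_le
      omega
  | not φ ih =>
      simp only [Formula.allVars, Formula.length, Formula.symbols, List.length_cons] at *
      omega
  | and φ ψ ihφ ihψ =>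
      simp only [Formula.allVars, Formula.length, Formula.symbols, List.length_append,
        List.length_cons] at *
      have := Finset.card_union_le φ.allVars ψ.allVars
      omega
  | or φ ψ ihφ ihψ =>
      simp only [Formula.allVars, Formula.length, Formula.symbols, List.length_append,
        List.length_cons] at *
      have := Finset.card_union_le φ.allVars ψ.allVars
      omega
  | imp φ ψ ihφ ihψ =>
      simp only [Formula.allVars, Formula.length, Formula.symbols, List.length_append,
        List.length_cons] at *
      have := Finset.card_union_le φ.allVars ψ.allVars
      omega
  | all i φ ih =>
      simp only [Formula.allVars, Formula.length, Formula.symbols, List.length_cons] at *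
      have := Finset.card_insert_le i φ.allVars
      omega
  | ex i φ ih =>
      simp only [Formula.allVars, Formula.length, Formula.symbols, List.length_cons] at *
      have := Finset.card_insert_le i φ.allVars
      omega

theorem exists_good_inj (S : Finset ℕ) (j : ℕ) (hS : S.card < j) :
    ∃ f : ℕ → ℕ, Function.Injective f ∧ f 0 = 0 ∧ ∀ x ∈ S, f x < j := by
  classical
  set L : List ℕ := (S.erase 0).sort (· ≤ ·) with hLdef
  have hLlen : L.length < j := by
    rw [hLdef, Finset.length_sort]
    exact lt_of_le_of_lt (Finset.card_erase_le) hS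
  set f : ℕ → ℕ := fun n =>
    if n = 0 then 0 else if n ∈ L then L.idxOf n + 1 else n + j with hfdef
  have hf0 : f 0 = 0 := by simp [hfdef]
  have hfL : ∀ n ∈ L, f n = L.idxOf n + 1 := by
    intro n hn
    have hn0 : n ≠ 0 := by
      intro h; subst h
      exact (Finset.notMem_erase 0 S) ((Finset.mem_sort _).mp hn)
    simp [hfdef, hn0, hn]
  have hfelse : ∀ n, n ≠ 0 → n ∉ L → f n = n + j := by
    intro n hn0 hnL; simp [hfdef, hn0, hnL]
  have hfLlt : ∀ n ∈ L, f n < j := by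
    intro n hn
    rw [hfL n hn]
    have := List.idxOf_lt_length_iff.mpr hn
    omega
  refine ⟨f, ?_, hf0, ?_⟩
  · intro a b hab
    by_cases ha0 : a = 0 <;> by_cases hb0 : b = 0
    · rw [ha0, hb0]
    · exfalso
      by_cases hbL : b ∈ L
      · rw [ha0, hf0, hfL b hbL] at hab; omega
      · rw [ha0, hf0, hfelse b hb0 hbL] at hab; omega
    · exfalso
      by_cases haL : a ∈ L
      · rw [hb0, hf0, hfL a haL] at hab; omega
      · rw [hb0, hf0, hfelse a ha0 haL] at hab; omega
    · by_cases haL : a ∈ L <;> by_cases hbL : b ∈ L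
      · rw [hfL a haL, hfL b hbL] at hab
        have ha := List.idxOf_lt_length_iff.mpr haL
        have hb := List.idxOf_lt_length_iff.mpr hbL
        have : L[L.idxOf a] = L[L.idxOf b] := by
          congr 1; omega
        rwa [List.getElem_idxOf ha, List.getElem_idxOf hb] at this
      · exfalso
        have h1 := hfLlt a haL
        rw [hfelse b hb0 hbL] at hab; omega
      · exfalso
        have h1 := hfLlt b hbL
        rw [hfelse a ha0 haL] at hab; omega
      · rw [hfelse a ha0 haL, hfelse b hb0 hbL] at hab; omega
  · intro x hx
    by_cases hx0 : x = 0
    · rw [hx0, hf0]; omega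
    · have hxL : x ∈ L := (Finset.mem_sort _).mpr (Finset.mem_erase.mpr ⟨hx0, hx⟩)
      exact hfLlt x hxL

theorem Term.numeral_varsOf (n : ℕ) : (numeral n).varsOf = ∅ := by
  induction n <;> simp [numeral, Term.varsOf, *]

theorem Term.numeral_rename (f : ℕ → ℕ) (n : ℕ) : (numeral n).rename f = numeral n := by
  induction n <;> simp [numeral, Term.rename, *]

theorem Term.numeral_val (v : ℕ → ℕ) (n : ℕ) :
    Term.val stdModel v (numeral n) = n := by
  induction n <;> simp [numeral, Term.val, stdModel, *]

theorem Term.numeral_subst (x : ℕ) (u : Term) (n : ℕ) :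
    (numeral n).subst x u = numeral n := by
  induction n <;> simp [numeral, Term.subst, *]

theorem proves_rename {T : Set Formula} (hTsent : ∀ σ ∈ T, σ.IsSentence)
    {f : ℕ → ℕ} (hf : Function.Injective f) {σ : Formula} (h : Proves T σ) :
    Proves T (σ.rename f) := by
  intro M v hM
  rw [Formula.realize_rename hf]
  refine h M (v ∘ f) fun ψ hψ => ?_
  refine (Formula.realize_congr ψ (v := v) (w := v ∘ f) fun x hx => ?_).mp (hM ψ hψ)
  have := hTsent ψ hψ
  rw [Formula.IsSentence] at this
  rw [this] at hx
  exact absurd hx (Finset.notMem_empty x)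

theorem nameable_iff_BRel (T : Set Formula) (hTsent : ∀ σ ∈ T, σ.IsSentence)
    (g : ℕ → ℕ) (hg : GoodBound g) (i j : ℕ) :
    BRel T g i j ↔ Nameable T j i := by
  constructor
  · rintro ⟨μ, _, hlen, hn⟩
    exact ⟨μ, hlen, hn⟩
  · rintro ⟨μ, hlen, hfv, hp⟩
    have hcard : μ.allVars.card < j := lt_of_le_of_lt μ.card_allVars_le hlen
    obtain ⟨f, hfinj, hf0, hfS⟩ := exists_good_inj μ.allVars j hcard
    refine ⟨μ.rename f, ?_, ?_, ?_, ?_⟩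
    · refine hg.2 _ j ?_ ?_
      · rw [Formula.rename_allVars]
        intro x hx
        rcases Finset.mem_image.mp hx with ⟨y, hy, rfl⟩
        exact Finset.mem_range.mpr (hfS y hy)
      · rw [Formula.rename_length]; exact hlen
    · rw [Formula.rename_length]; exact hlen
    · refine subset_trans (Formula.rename_freeVars f μ) ?_
      refine subset_trans (Finset.image_subset_image hfv) ?_
      rw [Finset.image_singleton, hf0]
    · have hren := proves_rename hTsent hfinj hp
      have heq : (Formula.all 0 (Formula.iffF μ (.eq v0 (numeral i)))).rename f =
          Formula.all 0 (Formula.iffF (μ.rename f) (.eq v0 (numeral i))) := by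
        simp [Formula.rename, Formula.iffF, Term.rename, v0, hf0, Term.numeral_rename]
      rwa [heq] at hren

theorem Term.varsOf_subst_subset (t : Term) (x : ℕ) (u : Term) :
    (t.subst x u).varsOf ⊆ t.varsOf.erase x ∪ u.varsOf := by
  induction t with
  | var i =>
      by_cases h : i = x
      · subst h; simp [Term.subst, Term.varsOf]
      · simp only [Term.subst, if_neg h, Term.varsOf]
        intro y hy
        simp only [Finset.mem_singleton] at hy
        subst hy
        exact Finset.mem_union_left _ (Finset.mem_erase.mpr ⟨h, by simp [Term.varsOf]⟩)
  | zero => simp [Term.subst, Term.varsOf]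
  | succ t ih => simpa [Term.subst, Term.varsOf] using ih
  | add t u iht ihu =>
      simp only [Term.subst, Term.varsOf]
      intro y hy
      rcases Finset.mem_union.mp hy with h | h
      · rcases Finset.mem_union.mp (iht h) with h' | h'
        · exact Finset.mem_union_left _ (Finset.mem_erase.mpr
            ⟨(Finset.mem_erase.mp h').1, Finset.mem_union_left _ (Finset.mem_erase.mp h').2⟩)
        · exact Finset.mem_union_right _ h'
      · rcases Finset.mem_union.mp (ihu h) with h' | h'
        · exact Finset.mem_union_left _ (Finset.mem_erase.mpr
            ⟨(Finset.mem_erase.mp h').1, Finset.mem_union_right _ (Finset.mem_erase.mp h').2⟩)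
        · exact Finset.mem_union_right _ h'
  | mul t u iht ihu =>
      simp only [Term.subst, Term.varsOf]
      intro y hy
      rcases Finset.mem_union.mp hy with h | h
      · rcases Finset.mem_union.mp (iht h) with h' | h'
        · exact Finset.mem_union_left _ (Finset.mem_erase.mpr
            ⟨(Finset.mem_erase.mp h').1, Finset.mem_union_left _ (Finset.mem_erase.mp h').2⟩)
        · exact Finset.mem_union_right _ h'
      · rcases Finset.mem_union.mp (ihu h) with h' | h'
        · exact Finset.mem_union_left _ (Finset.mem_erase.mpr
            ⟨(Finset.mem_erase.mp h').1, Finset.mem_union_right _ (Finset.mem_erase.mp h').2⟩)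
        · exact Finset.mem_union_right _ h'

theorem Formula.freeVars_subst_subset (ψ : Formula) (x : ℕ) (t : Term) :
    (ψ.subst x t).freeVars ⊆ ψ.freeVars.erase x ∪ t.varsOf := by
  induction ψ with
  | eq a b =>
      simp only [Formula.subst, Formula.freeVars]
      intro y hy
      rcases Finset.mem_union.mp hy with h | h
      · rcases Finset.mem_union.mp (a.varsOf_subst_subset x t h) with h' | h'
        · exact Finset.mem_union_left _ (Finset.mem_erase.mpr
            ⟨(Finset.mem_erase.mp h').1, Finset.mem_union_left _ (Finset.mem_erase.mp h').2⟩)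
        · exact Finset.mem_union_right _ h'
      · rcases Finset.mem_union.mp (b.varsOf_subst_subset x t h) with h' | h'
        · exact Finset.mem_union_left _ (Finset.mem_erase.mpr
            ⟨(Finset.mem_erase.mp h').1, Finset.mem_union_right _ (Finset.mem_erase.mp h').2⟩)
        · exact Finset.mem_union_right _ h'
  | lt a b =>
      simp only [Formula.subst, Formula.freeVars]
      intro y hy
      rcases Finset.mem_union.mp hy with h | h
      · rcases Finset.mem_union.mp (a.varsOf_subst_subset x t h) with h' | h'
        · exact Finset.mem_union_left _ (Finset.mem_erase.mpr
            ⟨(Finset.mem_erase.mp h').1, Finset.mem_union_left _ (Finset.mem_erase.mp h').2⟩)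
        · exact Finset.mem_union_right _ h'
      · rcases Finset.mem_union.mp (b.varsOf_subst_subset x t h) with h' | h'
        · exact Finset.mem_union_left _ (Finset.mem_erase.mpr
            ⟨(Finset.mem_erase.mp h').1, Finset.mem_union_right _ (Finset.mem_erase.mp h').2⟩)
        · exact Finset.mem_union_right _ h'
  | not φ ih => simpa [Formula.subst, Formula.freeVars] using ih
  | and φ ψ ihφ ihψ =>
      simp only [Formula.subst, Formula.freeVars]
      intro y hy
      rcases Finset.mem_union.mp hy with h | h
      · rcases Finset.mem_union.mp (ihφ h) with h' | h'
        · exact Finset.mem_union_left _ (Finset.mem_erase.mpr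
            ⟨(Finset.mem_erase.mp h').1, Finset.mem_union_left _ (Finset.mem_erase.mp h').2⟩)
        · exact Finset.mem_union_right _ h'
      · rcases Finset.mem_union.mp (ihψ h) with h' | h'
        · exact Finset.mem_union_left _ (Finset.mem_erase.mpr
            ⟨(Finset.mem_erase.mp h').1, Finset.mem_union_right _ (Finset.mem_erase.mp h').2⟩)
        · exact Finset.mem_union_right _ h'
  | or φ ψ ihφ ihψ =>
      simp only [Formula.subst, Formula.freeVars]
      intro y hy
      rcases Finset.mem_union.mp hy with h | h
      · rcases Finset.mem_union.mp (ihφ h) with h' | h'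
        · exact Finset.mem_union_left _ (Finset.mem_erase.mpr
            ⟨(Finset.mem_erase.mp h').1, Finset.mem_union_left _ (Finset.mem_erase.mp h').2⟩)
        · exact Finset.mem_union_right _ h'
      · rcases Finset.mem_union.mp (ihψ h) with h' | h'
        · exact Finset.mem_union_left _ (Finset.mem_erase.mpr
            ⟨(Finset.mem_erase.mp h').1, Finset.mem_union_right _ (Finset.mem_erase.mp h').2⟩)
        · exact Finset.mem_union_right _ h'
  | imp φ ψ ihφ ihψ =>
      simp only [Formula.subst, Formula.freeVars]
      intro y hy
      rcases Finset.mem_union.mp hy with h | h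
      · rcases Finset.mem_union.mp (ihφ h) with h' | h'
        · exact Finset.mem_union_left _ (Finset.mem_erase.mpr
            ⟨(Finset.mem_erase.mp h').1, Finset.mem_union_left _ (Finset.mem_erase.mp h').2⟩)
        · exact Finset.mem_union_right _ h'
      · rcases Finset.mem_union.mp (ihψ h) with h' | h'
        · exact Finset.mem_union_left _ (Finset.mem_erase.mpr
            ⟨(Finset.mem_erase.mp h').1, Finset.mem_union_right _ (Finset.mem_erase.mp h').2⟩)
        · exact Finset.mem_union_right _ h'
  | all i φ ih =>
      by_cases hix : i = x
      · subst hix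
        simp only [Formula.subst, if_pos rfl, Formula.freeVars]
        intro y hy
        rcases Finset.mem_erase.mp hy with ⟨hyi, hym⟩
        exact Finset.mem_union_left _
          (Finset.mem_erase.mpr ⟨hyi, Finset.mem_erase.mpr ⟨hyi, hym⟩⟩)
      · simp only [Formula.subst, if_neg hix, Formula.freeVars]
        intro y hy
        rcases Finset.mem_erase.mp hy with ⟨hyi, hym⟩
        rcases Finset.mem_union.mp (ih hym) with h' | h'
        · exact Finset.mem_union_left _ (Finset.mem_erase.mpr
            ⟨(Finset.mem_erase.mp h').1,
              Finset.mem_erase.mpr ⟨hyi, (Finset.mem_erase.mp h').2⟩⟩)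
        · exact Finset.mem_union_right _ h'
  | ex i φ ih =>
      by_cases hix : i = x
      · subst hix
        simp only [Formula.subst, if_pos rfl, Formula.freeVars]
        intro y hy
        rcases Finset.mem_erase.mp hy with ⟨hyi, hym⟩
        exact Finset.mem_union_left _
          (Finset.mem_erase.mpr ⟨hyi, Finset.mem_erase.mpr ⟨hyi, hym⟩⟩)
      · simp only [Formula.subst, if_neg hix, Formula.freeVars]
        intro y hy
        rcases Finset.mem_erase.mp hy with ⟨hyi, hym⟩
        rcases Finset.mem_union.mp (ih hym) with h' | h'
        · exact Finset.mem_union_left _ (Finset.mem_erase.mpr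
            ⟨(Finset.mem_erase.mp h').1,
              Finset.mem_erase.mpr ⟨hyi, (Finset.mem_erase.mp h').2⟩⟩)
        · exact Finset.mem_union_right _ h'

theorem Term.subst_of_not_mem {t : Term} {x : ℕ} (h : x ∉ t.varsOf) (u : Term) :
    t.subst x u = t := by
  induction t with
  | var i =>
      have : i ≠ x := by simp [Term.varsOf] at h; exact fun h' => h h'.symm
      simp [Term.subst, this]
  | zero => rfl
  | succ t ih => simp only [Term.varsOf] at h; simp [Term.subst, ih h]
  | add t u iht ihu =>
      simp only [Term.varsOf, Finset.mem_union, not_or] at h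
      simp [Term.subst, iht h.1, ihu h.2]
  | mul t u iht ihu =>
      simp only [Term.varsOf, Finset.mem_union, not_or] at h
      simp [Term.subst, iht h.1, ihu h.2]

theorem Formula.subst_of_not_free {ψ : Formula} {x : ℕ} (h : x ∉ ψ.freeVars) (t : Term) :
    ψ.subst x t = ψ := by
  induction ψ with
  | eq a b =>
      simp only [Formula.freeVars, Finset.mem_union, not_or] at h
      simp [Formula.subst, Term.subst_of_not_mem h.1, Term.subst_of_not_mem h.2]
  | lt a b =>
      simp only [Formula.freeVars, Finset.mem_union, not_or] at h
      simp [Formula.subst, Term.subst_of_not_mem h.1, Term.subst_of_not_mem h.2]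
  | not φ ih => simp only [Formula.freeVars] at h; simp [Formula.subst, ih h]
  | and φ ψ ihφ ihψ =>
      simp only [Formula.freeVars, Finset.mem_union, not_or] at h
      simp [Formula.subst, ihφ h.1, ihψ h.2]
  | or φ ψ ihφ ihψ =>
      simp only [Formula.freeVars, Finset.mem_union, not_or] at h
      simp [Formula.subst, ihφ h.1, ihψ h.2]
  | imp φ ψ ihφ ihψ =>
      simp only [Formula.freeVars, Finset.mem_union, not_or] at h
      simp [Formula.subst, ihφ h.1, ihψ h.2]
  | all i φ ih =>
      by_cases hix : i = x
      · simp [Formula.subst, hix]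
      · simp only [Formula.freeVars, Finset.mem_erase, not_and] at h
        have : x ∉ φ.freeVars := fun hm => (h (fun h' => hix h'.symm)) hm
        simp [Formula.subst, hix, ih this]
  | ex i φ ih =>
      by_cases hix : i = x
      · simp [Formula.subst, hix]
      · simp only [Formula.freeVars, Finset.mem_erase, not_and] at h
        have : x ∉ φ.freeVars := fun hm => (h (fun h' => hix h'.symm)) hm
        simp [Formula.subst, hix, ih this]

/-- The meaning of φ and ψ: for any number i and closed term s with value 𝐬, φ(i,s) is
true iff some formula μ with at most the free variable v₀ and |μ| < 𝐬 names i, and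
ψ(i,s) is true iff i is the least number not nameable by a formula of length < 𝐬. -/
theorem phi_psi_meaning
    (T : Set Formula) (hTsent : ∀ σ ∈ T, σ.IsSentence)
    (hQT : QAxioms ⊆ T) (hdef : Definable (PrSet T))
    (g : ℕ → ℕ) (hg : GoodBound g)
    (φ : Formula) (hφ : DefinesRel φ (BRel T g)) (hφ2 : 2 ∉ φ.allVars)
    (i : ℕ) (s : Term) (hs : s.varsOf = ∅) :
    (IsTrue ((φ.subst 0 (numeral i)).subst 1 s) ↔
        ∃ μ : Formula, μ.length < s.valNat ∧ Names T μ i) ∧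
      (IsTrue (((psiOf φ).subst 0 (numeral i)).subst 1 s) ↔
        ¬ Nameable T s.valNat i ∧ ∀ m < i, Nameable T s.valNat m) := by
  obtain ⟨hφfv, hφdef⟩ := hφ
  set j := s.valNat with hj
  -- canonical realization predicate
  set P : ℕ → ℕ → Prop := fun m k =>
    Formula.Realize stdModel
      (Function.update (Function.update (fun _ => 0) 1 k) 0 m) φ with hP
  have hvt : ∀ (t : Term), t.varsOf = ∅ → ∀ v : ℕ → ℕ,
      Term.val stdModel v t = t.valNat := by
    intro t ht v
    exact Term.val_congr t (fun x hx => by rw [ht] at hx; exact absurd hx (Finset.notMem_empty x))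
  have hkey : ∀ (m : ℕ) (t : Term), t.varsOf = ∅ → ∀ v : ℕ → ℕ,
      (Formula.Realize stdModel v ((φ.subst 0 (numeral m)).subst 1 t) ↔ P m t.valNat) := by
    intro m t ht v
    rw [Formula.realize_subst (M := stdModel) _ 1 t
      (fun y hy => by rw [ht] at hy; exact absurd hy (Finset.notMem_empty y)) v]
    rw [Formula.realize_subst (M := stdModel) φ 0 (numeral m)
      (fun y hy => by rw [Term.numeral_varsOf] at hy; exact absurd hy (Finset.notMem_empty y)) _]
    refine Formula.realize_congr φ fun x hx => ?_
    have hx01 : x = 0 ∨ x = 1 := by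
      have := hφfv hx
      simpa using this
    rcases hx01 with rfl | rfl
    · simp [Term.numeral_val]
    · simp [Function.update_apply, hvt t ht]
  have hnum_valNat : ∀ k : ℕ, (numeral k).valNat = k := fun k =>
    Term.numeral_val (fun _ => 0) k
  have hPB : ∀ m k : ℕ, BRel T g m k ↔ P m k := by
    intro m k
    rw [hφdef m k]
    constructor
    · intro h
      have := (hkey m (numeral k) (Term.numeral_varsOf k) (fun _ => 0)).mp (h _)
      rwa [hnum_valNat k] at this
    · intro h v
      refine (hkey m (numeral k) (Term.numeral_varsOf k) v).mpr ?_
      rwa [hnum_valNat k]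
  have hPname : ∀ m k : ℕ, P m k ↔ Nameable T k m := fun m k =>
    (hPB m k).symm.trans (nameable_iff_BRel T hTsent g hg m k)
  have part1 : IsTrue ((φ.subst 0 (numeral i)).subst 1 s) ↔ Nameable T j i := by
    constructor
    · intro h
      exact (hPname i j).mp ((hkey i s hs (fun _ => 0)).mp (h _))
    · intro h v
      exact (hkey i s hs v).mpr ((hPname i j).mpr h)
  refine ⟨part1, ?_⟩
  -- Part 2
  have h0free : (0 : ℕ) ∉ (φ.subst 0 v2).freeVars := by
    intro h
    rcases Finset.mem_union.mp (Formula.freeVars_subst_subset φ 0 v2 h) with h' | h'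
    · exact (Finset.mem_erase.mp h').1 rfl
    · simp [v2, Term.varsOf] at h'
  have hsub : ((psiOf φ).subst 0 (numeral i)).subst 1 s =
      .and (.not ((φ.subst 0 (numeral i)).subst 1 s))
        (.all 2 (.imp (.lt v2 (numeral i)) ((φ.subst 0 v2).subst 1 s))) := by
    have e1 : (φ.subst 0 (Term.var 2)).subst 0 (numeral i) = φ.subst 0 (Term.var 2) :=
      Formula.subst_of_not_free h0free _
    simp [psiOf, Formula.subst, Term.subst, v0, v2, Term.numeral_subst, e1]
  rw [hsub]
  have hX : ∀ (v : ℕ → ℕ) (a : ℕ),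
      (Formula.Realize stdModel (Function.update v 2 a) ((φ.subst 0 v2).subst 1 s) ↔ P a j) := by
    intro v a
    rw [Formula.realize_subst (M := stdModel) _ 1 s
      (fun y hy => by rw [hs] at hy; exact absurd hy (Finset.notMem_empty y)) _]
    rw [Formula.realize_subst (M := stdModel) φ 0 v2
      (fun y hy => by
        simp only [v2, Term.varsOf, Finset.mem_singleton] at hy
        subst hy; exact hφ2) _]
    refine Formula.realize_congr φ fun x hx => ?_
    have hx01 : x = 0 ∨ x = 1 := by
      have := hφfv hx
      simpa using this
    rcases hx01 with rfl | rfl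
    · simp [v2, Term.val, Function.update_apply]
    · simp [Function.update_apply, hvt s hs, hj]
  have hAnd : ∀ A B : Formula, IsTrue (.and A B) ↔ IsTrue A ∧ IsTrue B := by
    intro A B
    constructor
    · intro h; exact ⟨fun v => (h v).1, fun v => (h v).2⟩
    · intro h v; exact ⟨h.1 v, h.2 v⟩
  rw [hAnd]
  constructor
  · rintro ⟨h1, h2⟩
    constructor
    · intro hn
      exact (h1 (fun _ => 0)) ((hkey i s hs _).mpr ((hPname i j).mpr hn))
    · intro m hm
      have := h2 (fun _ => 0) m
      simp only [Formula.Realize, Term.val, v2, stdModel] at this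
      rw [Function.update_self] at this
      rw [Term.numeral_val] at this
      exact (hPname m j).mp ((hX _ m).mp (this hm))
  · rintro ⟨h1, h2⟩
    constructor
    · intro v hr
      exact h1 ((hPname i j).mp ((hkey i s hs v).mp hr))
    · intro v a
      simp only [Formula.Realize, Term.val, v2, stdModel]
      rw [Function.update_self, Term.numeral_val]
      intro ha
      exact (hX v a).mpr ((hPname a j).mpr (h2 a ha))

end Boolos
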